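/- Let G be a PDES with controllable events Σc and observable events Σo, and let L be a probabilistic language with L ⊆ L_G. Then there exists a scaling-factor function K such that L_{K/G} = L if and only if L is probabilistic controllable w.r.t. L_G and Σc and probabilistic observable w.r.t. L_G, Σc and Σo. -/
import Mathlib


open scoped BigOperators

noncomputable section

/-- Chain product: given step weights `w s σ` (interpreted as the conditional
probability of event `σ` after string `s`), `chainProd w pre rest` multiplies the
weights along `rest`, starting from the already-consumed prefix `pre`. -/
def chainProd {E : Type*} (w : List E → E → ℝ) : List E → List E → ℝ
  | _, [] => 1
  | pre, σ :: rest => w pre σ * chainProd w (pre ++ [σ]) rest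

/-- The (probabilistic) language generated by step weights `w`:
`langOf w [] = 1` and `langOf w (s ++ [σ]) = langOf w s * w s σ`. -/
def langOf {E : Type*} (w : List E → E → ℝ) : List E → ℝ := chainProd w []

/-- A probabilistic language over a finite event set `E`. -/
structure PLang (E : Type*) [Fintype E] where
  toFun : List E → ℝ
  nonneg : ∀ s, 0 ≤ toFun s
  le_one : ∀ s, toFun s ≤ 1
  eps : toFun [] = 1
  step : ∀ s, (∑ σ : E, toFun (s ++ [σ])) ≤ toFun s

/-- `L1` is a probabilistic sublanguage of `L2`. -/
def PSub {E : Type*} (L1 L2 : List E → ℝ) : Prop :=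
  (∀ s, 0 < L1 s → 0 < L2 s) ∧
  ∀ s, 0 < L1 s → ∀ σ : E, L1 (s ++ [σ]) / L1 s ≤ L2 (s ++ [σ]) / L2 s

/-- Intersection of probabilistic languages. -/
def pInter {E : Type*} (L1 L2 : List E → ℝ) : List E → ℝ :=
  langOf fun s σ => min (L1 (s ++ [σ]) / L1 s) (L2 (s ++ [σ]) / L2 s)

/-- Natural projection erasing the events outside the observable set `So`. -/
def proj {E : Type*} [DecidableEq E] (So : Finset E) (s : List E) : List E :=
  s.filter fun σ => decide (σ ∈ So)

/-- A probabilistic discrete event system (probabilistic automaton). -/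
structure PDES (X : Type*) (E : Type*) [Fintype E] where
  x0 : X
  trans : X → E → Option X
  prob : X → E → ℝ
  prob_nonneg : ∀ x σ, 0 ≤ prob x σ
  prob_le_one : ∀ x σ, prob x σ ≤ 1
  prob_pos_iff : ∀ x σ, 0 < prob x σ ↔ (trans x σ).isSome
  sum_le_one : ∀ x, (∑ σ : E, prob x σ) ≤ 1

/-- Extension of the partial transition function to strings. -/
def PDES.transStar {X E : Type*} [Fintype E] (G : PDES X E) (s : List E) : Option X :=
  s.foldl (fun ox σ => ox.bind fun x => G.trans x σ) (some G.x0)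

/-- Step weight of a PDES: `ρ(δ(x0,s),σ)` when `δ(x0,s)` is defined, `0` otherwise. -/
def PDES.w {X E : Type*} [Fintype E] (G : PDES X E) (s : List E) (σ : E) : ℝ :=
  (G.transStar s).elim 0 fun x => G.prob x σ

/-- The probabilistic language generated by a PDES. -/
def PDES.lang {X E : Type*} [Fintype E] (G : PDES X E) : List E → ℝ := langOf G.w

/-- The set of control patterns: subsets of events containing every uncontrollable event. -/
def ControlPatterns {E : Type*} [Fintype E] [DecidableEq E] (Sc : Finset E) :
    Finset (Finset E) :=
  Finset.univ.filter fun θ => Scᶜ ⊆ θ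

/-- `Sp` is a probabilistic P-supervisor for `G`: to every observation of a string in the
support of `L_G` it assigns a probability distribution on the control patterns. -/
def IsSupervisor {X E : Type*} [Fintype E] [DecidableEq E] (G : PDES X E)
    (Sc So : Finset E) (Sp : List E → Finset E → ℝ) : Prop :=
  ∀ s : List E, 0 < G.lang s →
    (∀ θ ∈ ControlPatterns Sc, 0 ≤ Sp (proj So s) θ) ∧
    (∑ θ ∈ ControlPatterns Sc, Sp (proj So s) θ) = 1

/-- The controlled probabilistic language `L_{Sp/G}`. -/
def supLang {X E : Type*} [Fintype E] [DecidableEq E] (G : PDES X E)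
    (Sc So : Finset E) (Sp : List E → Finset E → ℝ) : List E → ℝ :=
  langOf fun s σ =>
    G.w s σ * ∑ θ ∈ (ControlPatterns Sc).filter (fun θ => σ ∈ θ), Sp (proj So s) θ

/-- `K` is a scaling-factor function for `G`: on every observation of a string in the
support of `L_G` it takes values in `[0,1]` and equals `1` on uncontrollable events. -/
def IsScaling {X E : Type*} [Fintype E] [DecidableEq E] (G : PDES X E)
    (Sc So : Finset E) (K : List E → E → ℝ) : Prop :=
  ∀ s : List E, 0 < G.lang s → ∀ σ : E,
    0 ≤ K (proj So s) σ ∧ K (proj So s) σ ≤ 1 ∧ (σ ∉ Sc → K (proj So s) σ = 1)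

/-- The controlled probabilistic language `L_{K/G}`. -/
def kLang {X E : Type*} [Fintype E] [DecidableEq E] (G : PDES X E)
    (So : Finset E) (K : List E → E → ℝ) : List E → ℝ :=
  langOf fun s σ => G.w s σ * K (proj So s) σ

/-- Probabilistic controllability (language form). -/
def ProbControllable {E : Type*} (L M : List E → ℝ) (Sc : Finset E) : Prop :=
  ∀ s : List E, 0 < L s → ∀ σ : E, σ ∉ Sc →
    L (s ++ [σ]) / L s = M (s ++ [σ]) / M s

/-- Probabilistic observability (language form). -/
def ProbObservable {E : Type*} [DecidableEq E] (L M : List E → ℝ)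
    (Sc So : Finset E) : Prop :=
  ∀ s1 s2 : List E, 0 < L s1 → 0 < L s2 → proj So s1 = proj So s2 →
    ∀ σ ∈ Sc,
      (M (s1 ++ [σ]) / M s1) * (L (s2 ++ [σ]) / L s2) =
      (M (s2 ++ [σ]) / M s2) * (L (s1 ++ [σ]) / L s1)

/-- Probabilistic controllability (automata form). -/
def AutControllable {X Q E : Type*} [Fintype E] (G : PDES X E) (H : PDES Q E)
    (Sc : Finset E) : Prop :=
  ∀ s : List E, 0 < H.lang s → ∀ x q,
    G.transStar s = some x → H.transStar s = some q →
    ∀ σ : E, σ ∉ Sc → H.prob q σ = G.prob x σ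

/-- Probabilistic observability (automata form). -/
def AutObservable {X Q E : Type*} [Fintype E] [DecidableEq E] (G : PDES X E)
    (H : PDES Q E) (Sc So : Finset E) : Prop :=
  ∀ s1 s2 : List E, 0 < H.lang s1 → 0 < H.lang s2 → proj So s1 = proj So s2 →
    ∀ x1 q1 x2 q2,
      G.transStar s1 = some x1 → H.transStar s1 = some q1 →
      G.transStar s2 = some x2 → H.transStar s2 = some q2 →
      ∀ σ ∈ Sc, G.prob x1 σ * H.prob q2 σ = G.prob x2 σ * H.prob q1 σ

/-- Reachability in the controllability-testing automaton `G_tc`.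
States are pairs `(x,q)` (as `Sum.inl`) together with the special state `d` (`Sum.inr ()`). -/
inductive TcReach {X Q E : Type*} [Fintype E] (G : PDES X E) (H : PDES Q E)
    (Sc : Finset E) : (X × Q) ⊕ Unit → Prop
  | init : TcReach G H Sc (Sum.inl (G.x0, H.x0))
  | good (x q x' q' σ) : TcReach G H Sc (Sum.inl (x, q)) →
      G.trans x σ = some x' → H.trans q σ = some q' →
      ((σ ∉ Sc ∧ G.prob x σ = H.prob q σ) ∨ σ ∈ Sc) →
      TcReach G H Sc (Sum.inl (x', q'))
  | bad (x q σ) : TcReach G H Sc (Sum.inl (x, q)) →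
      σ ∉ Sc → G.prob x σ ≠ H.prob q σ →
      TcReach G H Sc (Sum.inr ())

/-- Reachability in the observability-testing automaton `G_to`.
States are 4-tuples `(x1,q1,x2,q2)` (as `Sum.inl`) together with the special state `d`. -/
inductive ToReach {X Q E : Type*} [Fintype E] (G : PDES X E) (H : PDES Q E)
    (Sc So : Finset E) : (X × Q × X × Q) ⊕ Unit → Prop
  | init : ToReach G H Sc So (Sum.inl (G.x0, H.x0, G.x0, H.x0))
  | sync (x1 q1 x2 q2 x1' q1' x2' q2' σ) :
      ToReach G H Sc So (Sum.inl (x1, q1, x2, q2)) →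
      G.trans x1 σ = some x1' → H.trans q1 σ = some q1' →
      G.trans x2 σ = some x2' → H.trans q2 σ = some q2' →
      (σ ∉ Sc ∨ (σ ∈ Sc ∧ G.prob x1 σ * H.prob q2 σ = G.prob x2 σ * H.prob q1 σ)) →
      ToReach G H Sc So (Sum.inl (x1', q1', x2', q2'))
  | bad (x1 q1 x2 q2 σ) :
      ToReach G H Sc So (Sum.inl (x1, q1, x2, q2)) →
      σ ∈ Sc → G.prob x1 σ * H.prob q2 σ ≠ G.prob x2 σ * H.prob q1 σ →
      ToReach G H Sc So (Sum.inr ())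
  | left (x1 q1 x2 q2 x1' q1' σ) :
      ToReach G H Sc So (Sum.inl (x1, q1, x2, q2)) → σ ∉ So →
      G.trans x1 σ = some x1' → H.trans q1 σ = some q1' →
      ToReach G H Sc So (Sum.inl (x1', q1', x2, q2))
  | right (x1 q1 x2 q2 x2' q2' σ) :
      ToReach G H Sc So (Sum.inl (x1, q1, x2, q2)) → σ ∉ So →
      G.trans x2 σ = some x2' → H.trans q2 σ = some q2' →
      ToReach G H Sc So (Sum.inl (x1, q1, x2', q2'))

/-- `H` is a probabilistic subautomaton of `G`, as witnessed by the state inclusion `e`. -/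
def SubautomatonVia {Q X E : Type*} [Fintype E] (H : PDES Q E) (G : PDES X E)
    (e : Q → X) : Prop :=
  Function.Injective e ∧ e H.x0 = G.x0 ∧
  ∀ q σ, H.prob q σ ≤ G.prob (e q) σ ∧
    ∀ q', H.trans q σ = some q' → G.trans (e q) σ = some (e q')

/-- The product of two PDESs. -/
def PDES.prod {X Q E : Type*} [Fintype E] (G : PDES X E) (H : PDES Q E) :
    PDES (X × Q) E where
  x0 := (G.x0, H.x0)
  trans := fun p σ => (G.trans p.1 σ).bind fun x => (H.trans p.2 σ).map fun q => (x, q)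
  prob := fun p σ => min (G.prob p.1 σ) (H.prob p.2 σ)
  prob_nonneg := fun p σ => le_min (G.prob_nonneg _ _) (H.prob_nonneg _ _)
  prob_le_one := fun p σ => le_trans (min_le_left _ _) (G.prob_le_one _ _)
  prob_pos_iff := by
    intro p σ
    rw [lt_min_iff, G.prob_pos_iff, H.prob_pos_iff]
    cases hG : G.trans p.1 σ <;> cases hH : H.trans p.2 σ <;> simp [hG, hH]
  sum_le_one := fun p =>
    le_trans (Finset.sum_le_sum fun σ _ => min_le_left _ _) (G.sum_le_one p.1)

end

noncomputable section ProofAux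

theorem chainProd_append_single {E : Type*} (w : List E → E → ℝ) (s : List E) (σ : E) :
    ∀ pre, chainProd w pre (s ++ [σ]) = chainProd w pre s * w (pre ++ s) σ := by
  induction s with
  | nil => intro pre; simp [chainProd]
  | cons a s ih =>
      intro pre
      simp only [List.cons_append, chainProd, List.append_eq, ih, List.append_assoc,
        List.singleton_append, List.nil_append, mul_assoc]

theorem langOf_append {E : Type*} (w : List E → E → ℝ) (s : List E) (σ : E) :
    langOf w (s ++ [σ]) = langOf w s * w s σ := by
  simpa [langOf] using chainProd_append_single w s σ []

theorem langOf_eps {E : Type*} (w : List E → E → ℝ) : langOf w [] = 1 := rfl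

theorem PLang.zero_step {E : Type*} [Fintype E] (L : PLang E) (s : List E) (σ : E)
    (h : L.toFun s = 0) : L.toFun (s ++ [σ]) = 0 := by
  have h1 : L.toFun (s ++ [σ]) ≤ ∑ τ : E, L.toFun (s ++ [τ]) :=
    Finset.single_le_sum (f := fun τ => L.toFun (s ++ [τ])) (fun τ _ => L.nonneg _)
      (Finset.mem_univ σ)
  have := le_trans h1 (L.step s)
  exact le_antisymm (by linarith [this]) (L.nonneg _)

theorem PDES.w_nonneg {X E : Type*} [Fintype E] (G : PDES X E) (s : List E) (σ : E) :
    0 ≤ G.w s σ := by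
  unfold PDES.w
  cases G.transStar s with
  | none => simp
  | some x => simpa using G.prob_nonneg x σ

theorem PDES.lang_ratio {X E : Type*} [Fintype E] (G : PDES X E) (s : List E) (σ : E)
    (h : 0 < G.lang s) : G.lang (s ++ [σ]) / G.lang s = G.w s σ := by
  rw [show G.lang (s ++ [σ]) = G.lang s * G.w s σ from langOf_append G.w s σ]
  field_simp

open Classical in
noncomputable def myK {X E : Type*} [Fintype E] [DecidableEq E] (G : PDES X E)
    (Sc So : Finset E) (L : List E → ℝ) (t : List E) (σ : E) : ℝ :=
  if σ ∈ Sc then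
    (if h : ∃ s, 0 < L s ∧ proj So s = t ∧ 0 < G.w s σ then
      (L (h.choose ++ [σ]) / L h.choose) / G.w h.choose σ
    else 1)
  else 1

end ProofAux

/-- a scaling-factor function achieving `L` exists iff `L` is
probabilistic controllable and observable. -/
theorem scaling_exists_iff_controllable_observable {X E : Type*} [Fintype E]
    [DecidableEq E] (G : PDES X E) (Sc So : Finset E) (L : PLang E)
    (hsub : PSub L.toFun G.lang) :
    (∃ K : List E → E → ℝ,
        IsScaling G Sc So K ∧ kLang G So K = L.toFun) ↔
    (ProbControllable L.toFun G.lang Sc ∧ ProbObservable L.toFun G.lang Sc So) := by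
  constructor
  · rintro ⟨K, hK, hEq⟩
    have hratio : ∀ s σ, 0 < L.toFun s →
        L.toFun (s ++ [σ]) / L.toFun s = G.w s σ * K (proj So s) σ := by
      intro s σ hs
      have h1 : L.toFun (s ++ [σ]) = L.toFun s * (G.w s σ * K (proj So s) σ) := by
        rw [← hEq]; exact langOf_append _ s σ
      rw [h1]; field_simp
    constructor
    · intro s hs σ hσ
      have hGs : 0 < G.lang s := hsub.1 s hs
      have hK1 : K (proj So s) σ = 1 := (hK s hGs σ).2.2 hσ
      rw [hratio s σ hs, hK1, G.lang_ratio s σ hGs, mul_one]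
    · intro s1 s2 h1 h2 hproj σ _
      have hG1 : 0 < G.lang s1 := hsub.1 s1 h1
      have hG2 : 0 < G.lang s2 := hsub.1 s2 h2
      rw [hratio s1 σ h1, hratio s2 σ h2, G.lang_ratio s1 σ hG1,
        G.lang_ratio s2 σ hG2, hproj]
      ring
  · rintro ⟨hc, ho⟩
    refine ⟨myK G Sc So L.toFun, ?_, ?_⟩
    · intro s hGs σ
      unfold myK
      by_cases hσ : σ ∈ Sc
      · rw [if_pos hσ]
        refine ⟨?_, ?_, fun h => absurd hσ h⟩
        · split
          · next h =>
              obtain ⟨hL, _, hw⟩ := h.choose_spec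
              have := L.nonneg (h.choose ++ [σ])
              have := L.nonneg h.choose
              positivity
          · norm_num
        · split
          · next h =>
              obtain ⟨hL, _, hw⟩ := h.choose_spec
              have hGs' : 0 < G.lang h.choose := hsub.1 _ hL
              have hle : L.toFun (h.choose ++ [σ]) / L.toFun h.choose ≤ G.w h.choose σ := by
                have := hsub.2 h.choose hL σ
                rwa [G.lang_ratio _ σ hGs'] at this
              have hnn : 0 ≤ L.toFun (h.choose ++ [σ]) / L.toFun h.choose :=
                div_nonneg (L.nonneg _) (L.nonneg _)
              exact div_le_one_of_le₀ hle (le_of_lt hw)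
          · norm_num
      · simp [hσ]
    · funext s
      induction s using List.reverseRecOn with
      | nil => simp [kLang, langOf_eps, L.eps]
      | append_singleton s σ ih =>
        have hstep : kLang G So (myK G Sc So L.toFun) (s ++ [σ]) =
            L.toFun s * (G.w s σ * myK G Sc So L.toFun (proj So s) σ) := by
          rw [← ih]; exact langOf_append _ s σ
        rw [hstep]
        by_cases hs : 0 < L.toFun s
        · have hGs : 0 < G.lang s := hsub.1 s hs
          by_cases hσ : σ ∈ Sc
          · by_cases hw : 0 < G.w s σ
            · have hex : ∃ t, 0 < L.toFun t ∧ proj So t = proj So s ∧ 0 < G.w t σ :=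
                ⟨s, hs, rfl, hw⟩
              have hKval : myK G Sc So L.toFun (proj So s) σ =
                  (L.toFun (hex.choose ++ [σ]) / L.toFun hex.choose) / G.w hex.choose σ := by
                simp [myK, hσ, hex]
              obtain ⟨hL', hproj', hw'⟩ := hex.choose_spec
              set s' := hex.choose
              have hGs' : 0 < G.lang s' := hsub.1 _ hL'
              have hobs := ho s' s hL' hs hproj' σ hσ
              rw [G.lang_ratio _ σ hGs', G.lang_ratio _ σ hGs] at hobs
              rw [hKval]
              -- hobs : G.w s' σ * (L (s++[σ])/L s) = G.w s σ * (L (s'++[σ])/L s')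
              have hne : G.w s' σ ≠ 0 := ne_of_gt hw'
              have hne2 : L.toFun s ≠ 0 := ne_of_gt hs
              field_simp
              field_simp at hobs
              nlinarith [hobs]
            · have hw0 : G.w s σ = 0 := le_antisymm (not_lt.1 hw) (G.w_nonneg s σ)
              have hL0 : L.toFun (s ++ [σ]) = 0 := by
                have := hsub.2 s hs σ
                rw [G.lang_ratio _ σ hGs, hw0] at this
                have hnn : 0 ≤ L.toFun (s ++ [σ]) / L.toFun s :=
                  div_nonneg (L.nonneg _) (L.nonneg _)
                have hzero : L.toFun (s ++ [σ]) / L.toFun s = 0 := le_antisymm this hnn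
                have := (div_eq_zero_iff.1 hzero).resolve_right (ne_of_gt hs)
                exact this
              rw [hL0, hw0]; ring
          · have hK1 : myK G Sc So L.toFun (proj So s) σ = 1 := by simp [myK, hσ]
            have := hc s hs σ hσ
            rw [G.lang_ratio _ σ hGs] at this
            rw [hK1, mul_one, ← this]
            field_simp
        · have hs0 : L.toFun s = 0 := le_antisymm (not_lt.1 hs) (L.nonneg s)
          rw [hs0, L.zero_step s σ hs0]; ring
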